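/- Let V be a Euclidean vector space of dimension n with a lattice L, and let q be a positive-definite quadratic form on V. If α₁,…,αₘ are elements of L that span V over ℝ, then there exists an index k with √(q(αₖ)) ≥ Δ(L, q)^{1/(2n)}, where Δ(L,q) is the Gram determinant of a ℤ-basis of L. -/

import Mathlib

open Matrix Finset

-- trace equals sum of eigenvalues (real case)
lemma my_trace_eq_sum_eigenvalues {N : Type*} [Fintype N] [DecidableEq N]
    {A : Matrix N N ℝ} (hA : A.IsHermitian) :
    A.trace = ∑ i, hA.eigenvalues i := by
  simpa using hA.trace_eq_sum_eigenvalues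

lemma my_det_le_pow {N : Type*} [Fintype N] [DecidableEq N] [Nonempty N]
    {A : Matrix N N ℝ} (hA : A.PosDef) {c : ℝ}
    (h : ∀ i, A i i ≤ c) : A.det ≤ c ^ (Fintype.card N) := by
  classical
  set k : ℕ := Fintype.card N with hk
  have hk0 : 0 < k := Fintype.card_pos
  have hev := hA.eigenvalues_pos
  have hdet : A.det = ∏ i, hA.isHermitian.eigenvalues i := by
    simpa using hA.isHermitian.det_eq_prod_eigenvalues
  have htr : ∑ i, hA.isHermitian.eigenvalues i = ∑ i, A i i := by
    rw [← my_trace_eq_sum_eigenvalues hA.isHermitian, Matrix.trace]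
    rfl
  have hAMGM := Real.geom_mean_le_arith_mean_weighted Finset.univ
      (fun _ => (k : ℝ)⁻¹) (fun i => hA.isHermitian.eigenvalues i)
      (fun i _ => by positivity) (by
        simp only [Finset.sum_const, Finset.card_univ, nsmul_eq_mul, ← hk]
        field_simp)
      (fun i _ => (hev i).le)
  have hc0 : 0 ≤ c := by
    obtain ⟨i⟩ := ‹Nonempty N›
    have : 0 < A i i := hA.diag_pos
    linarith [h i]
  have hgm : (∏ i, hA.isHermitian.eigenvalues i ^ ((k : ℝ)⁻¹)) ≤ c := by
    refine hAMGM.trans ?_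
    rw [← Finset.mul_sum, htr]
    have : ∑ i, A i i ≤ (k : ℝ) * c := by
      calc ∑ i, A i i ≤ ∑ _i : N, c := Finset.sum_le_sum (fun i _ => h i)
      _ = (k : ℝ) * c := by simp [hk, mul_comm]
    calc (k : ℝ)⁻¹ * ∑ i, A i i ≤ (k : ℝ)⁻¹ * ((k : ℝ) * c) := by
          apply mul_le_mul_of_nonneg_left this (by positivity)
      _ = c := by field_simp
  have hprod_nonneg : 0 ≤ ∏ i, hA.isHermitian.eigenvalues i ^ ((k : ℝ)⁻¹) :=
    Finset.prod_nonneg fun i _ => Real.rpow_nonneg (hev i).le _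
  have := pow_le_pow_left₀ hprod_nonneg hgm k
  rw [← Finset.prod_pow] at this
  have heq : ∀ i : N, (hA.isHermitian.eigenvalues i ^ ((k : ℝ)⁻¹)) ^ k
      = hA.isHermitian.eigenvalues i := by
    intro i
    rw [← Real.rpow_natCast (hA.isHermitian.eigenvalues i ^ ((k : ℝ)⁻¹)) k,
      ← Real.rpow_mul (hev i).le, inv_mul_cancel₀ (by positivity), Real.rpow_one]
  simp_rw [heq] at this
  rw [hdet]
  exact this

lemma my_dot_gram {V : Type*} [AddCommGroup V] [Module ℝ V] {n : ℕ}
    (B : LinearMap.BilinForm ℝ V) (β : Module.Basis (Fin n) ℝ V) (x : Fin n → ℝ) :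
    x ⬝ᵥ ((LinearMap.BilinForm.toMatrix β B) *ᵥ x) = B (∑ i, x i • β i) (∑ j, x j • β j) := by
  simp only [Matrix.mulVec, dotProduct, LinearMap.BilinForm.toMatrix_apply, map_sum,
    LinearMap.sum_apply, _root_.map_smul, LinearMap.smul_apply, smul_eq_mul]
  simp_rw [Finset.mul_sum]
  rw [Finset.sum_comm]
  exact Finset.sum_congr rfl fun i _ => Finset.sum_congr rfl fun j _ => by ring

lemma my_gram_posDef {V : Type*} [AddCommGroup V] [Module ℝ V] {n : ℕ}
    (q : QuadraticForm ℝ V) (hq : ∀ x, x ≠ 0 → 0 < q x) (β : Module.Basis (Fin n) ℝ V) :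
    (LinearMap.BilinForm.toMatrix β (QuadraticMap.associated (R := ℝ) q)).PosDef := by
  set B := QuadraticMap.associated (R := ℝ) q with hB
  have hBxx : ∀ v, B v v = q v := fun v => by
    conv_rhs => rw [← QuadraticMap.toQuadraticMap_associated ℝ q]
    rfl
  have h2 : ∀ u v, B u v = QuadraticMap.polar q u v / 2 := fun u v => by
    have h' : ((2 : ℕ) • QuadraticMap.associated (R := ℝ) q) u v = q.polarBilin u v := by
      rw [QuadraticMap.two_nsmul_associated]
    simp only [LinearMap.smul_apply, nsmul_eq_mul, Nat.cast_ofNat,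
      QuadraticMap.polarBilin_apply_apply] at h'
    rw [hB]
    linarith
  have hsymm : ∀ u v, B u v = B v u := fun u v => by
    rw [h2, h2, QuadraticMap.polar_comm]
  refine Matrix.PosDef.of_dotProduct_mulVec_pos ?_ ?_
  · rw [Matrix.IsHermitian]
    ext i j
    simp [Matrix.conjTranspose_apply, LinearMap.BilinForm.toMatrix_apply, hsymm]
  · intro x hx
    rw [star_trivial, my_dot_gram]
    have hy : (∑ i, x i • β i) ≠ 0 := by
      intro hcon
      apply hx
      have : β.equivFun.symm x = 0 := by rwa [Module.Basis.equivFun_symm_apply]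
      simpa using β.equivFun.symm.injective (by simpa using this)
    rw [hBxx]
    exact hq _ hy

lemma my_assoc_polar {V : Type*} [AddCommGroup V] [Module ℝ V] (q : QuadraticForm ℝ V)
    (u v : V) :
    QuadraticMap.associated (R := ℝ) q u v = QuadraticMap.polar q u v / 2 := by
  have h' : ((2 : ℕ) • QuadraticMap.associated (R := ℝ) q) u v = q.polarBilin u v := by
    rw [QuadraticMap.two_nsmul_associated]
  simp only [LinearMap.smul_apply, nsmul_eq_mul, Nat.cast_ofNat,
    QuadraticMap.polarBilin_apply_apply] at h'
  linarith

lemma my_assoc_self {V : Type*} [AddCommGroup V] [Module ℝ V] (q : QuadraticForm ℝ V)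
    (v : V) : QuadraticMap.associated (R := ℝ) q v v = q v := by
  conv_rhs => rw [← QuadraticMap.toQuadraticMap_associated ℝ q]
  rfl



/-- The discriminant (Gram determinant) of a quadratic form `q` with respect to
a family of vectors `b`. -/
noncomputable def gramDet {ι V : Type*} [Fintype ι] [DecidableEq ι] [AddCommGroup V]
    [Module ℝ V] (q : QuadraticForm ℝ V) (b : ι → V) : ℝ :=
  (Matrix.of fun i j => QuadraticMap.polar (⇑q) (b i) (b j) / 2).det

theorem exists_large_lattice_generator'
    (n m : ℕ) (hn : 0 < n)
    (q : QuadraticForm ℝ (Fin n → ℝ)) (hq : ∀ x, x ≠ 0 → 0 < q x)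
    (b : Module.Basis (Fin n) ℝ (Fin n → ℝ))
    (α : Fin m → Fin n → ℝ)
    (hmem : ∀ i, α i ∈ Submodule.span ℤ (Set.range ⇑b))
    (hspan : Submodule.span ℝ (Set.range α) = ⊤) :
    ∃ k, Real.sqrt (q (α k)) ≥
      ((Matrix.of fun i j => QuadraticMap.polar (⇑q) (b i) (b j) / 2).det)
        ^ ((1 : ℝ) / (2 * (n : ℝ))) := by
  classical
  haveI : Nonempty (Fin n) := ⟨⟨0, hn⟩⟩
  set B := QuadraticMap.associated (R := ℝ) q with hB
  set M := LinearMap.BilinForm.toMatrix b B with hM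
  have hgram : (Matrix.of fun i j => QuadraticMap.polar (⇑q) (b i) (b j) / 2) = M := by
    ext i j
    rw [hM, LinearMap.BilinForm.toMatrix_apply, hB, my_assoc_polar]
    rfl
  rw [hgram]
  -- extract a basis from the spanning family
  obtain ⟨s, hsub, hsp, hind⟩ := exists_linearIndependent ℝ (Set.range α)
  rw [hspan] at hsp
  have hsfin : s.Finite := hind.setFinite
  haveI := hsfin.fintype
  let βs : Module.Basis s ℝ (Fin n → ℝ) := Module.Basis.mk hind (by rw [Subtype.range_coe, hsp])
  have hcard : Fintype.card s = n := by
    rw [← Module.finrank_eq_card_basis βs, Module.finrank_fin_fun]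
  let e : Fin n ≃ s := (Fintype.equivFinOfCardEq hcard).symm
  let β : Module.Basis (Fin n) ℝ (Fin n → ℝ) := βs.reindex e.symm
  have hβval : ∀ i, (β i : Fin n → ℝ) = ((e i : s) : Fin n → ℝ) := fun i => by
    simp [β, βs, Module.Basis.reindex_apply]
  have hβ : ∀ i, ∃ k, α k = β i := fun i => by
    rw [hβval i]
    exact hsub (e i).2
  choose g hg using hβ
  set G := LinearMap.BilinForm.toMatrix β B with hG
  have hGpos : G.PosDef := my_gram_posDef q hq β
  have hPB : (b.toMatrix β)ᵀ * M * (b.toMatrix β) = G :=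
    LinearMap.BilinForm.toMatrix_mul_basis_toMatrix b β B
  have hdetG : G.det = (b.toMatrix β).det ^ 2 * M.det := by
    rw [← hPB, Matrix.det_mul, Matrix.det_mul, Matrix.det_transpose]; ring
  -- the change of basis matrix has integer entries
  have hint : ∀ i j, ∃ z : ℤ, (z : ℝ) = b.toMatrix β i j := fun i j => by
    rw [Module.Basis.toMatrix_apply]
    have hmem' : β j ∈ Submodule.span ℤ (Set.range ⇑b) := by
      rw [← hg j]; exact hmem _
    obtain ⟨z, hz⟩ := (b.mem_span_iff_repr_mem ℤ (β j)).mp hmem' i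
    exact ⟨z, by exact_mod_cast hz⟩
  choose C hC using hint
  have hPC : b.toMatrix β = (Matrix.of C).map ((Int.castRingHom ℝ)) := by
    ext i j; exact (hC i j).symm
  have hdetP : (b.toMatrix β).det = (((Matrix.of C).det : ℤ) : ℝ) := by
    rw [hPC, ← RingHom.mapMatrix_apply, ← RingHom.map_det]; rfl
  have hPunit : IsUnit (b.toMatrix β).det := by
    haveI := b.invertibleToMatrix β
    exact Matrix.isUnit_det_of_invertible _
  have hd0 : (Matrix.of C).det ≠ 0 := by
    intro h
    rw [hdetP, h] at hPunit
    simp at hPunit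
  have hd1 : (1 : ℝ) ≤ (b.toMatrix β).det ^ 2 := by
    rw [hdetP]
    have h1 : (1 : ℤ) ≤ (Matrix.of C).det ^ 2 := by
      rcases lt_or_gt_of_ne hd0 with h | h <;> nlinarith
    exact_mod_cast h1
  have hdetGpos : 0 < G.det := hGpos.det_pos
  have hMdetpos : 0 < M.det := by
    by_contra hcon
    push_neg at hcon
    have hle : G.det ≤ 0 := by
      rw [hdetG]
      exact mul_nonpos_of_nonneg_of_nonpos (sq_nonneg _) hcon
    linarith
  have hMleG : M.det ≤ G.det := by
    calc M.det = 1 * M.det := (one_mul _).symm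
      _ ≤ (b.toMatrix β).det ^ 2 * M.det := mul_le_mul_of_nonneg_right hd1 hMdetpos.le
      _ = G.det := hdetG.symm
  -- pick the longest basis vector
  obtain ⟨k₀, -, hk₀⟩ := Finset.exists_max_image Finset.univ (fun i => q (α (g i)))
    ⟨⟨0, hn⟩, Finset.mem_univ _⟩
  set c := q (α (g k₀)) with hc
  have hβne : β k₀ ≠ 0 := β.ne_zero k₀
  have hcpos : 0 < c := by rw [hc, hg]; exact hq _ hβne
  have hdiag : ∀ i, G i i ≤ c := fun i => by
    rw [hG, LinearMap.BilinForm.toMatrix_apply, hB, my_assoc_self, ← hg i]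
    exact hk₀ i (Finset.mem_univ i)
  have hdetle : G.det ≤ c ^ n := by
    have := my_det_le_pow hGpos hdiag
    simpa [Fintype.card_fin] using this
  -- conclude
  refine ⟨g k₀, ?_⟩
  rw [ge_iff_le]
  set D := M.det with hD
  have hDc : D ≤ c ^ n := le_trans hMleG hdetle
  have h3 : D ^ ((1 : ℝ)/n) ≤ c := by
    calc D ^ ((1:ℝ)/n) ≤ (c ^ n) ^ ((1:ℝ)/n) :=
          Real.rpow_le_rpow hMdetpos.le hDc (by positivity)
      _ = c := by
          rw [← Real.rpow_natCast c n, ← Real.rpow_mul hcpos.le]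
          rw [show (n : ℝ) * ((1:ℝ)/n) = 1 by field_simp]
          exact Real.rpow_one c
  have h1 : D ^ ((1:ℝ)/(2*(n:ℝ))) = (D ^ ((1:ℝ)/n)) ^ ((1:ℝ)/2) := by
    rw [← Real.rpow_mul hMdetpos.le]
    congr 1
    have hn' : (n : ℝ) ≠ 0 := Nat.cast_ne_zero.mpr hn.ne'
    field_simp
  rw [h1]
  calc (D ^ ((1:ℝ)/n)) ^ ((1:ℝ)/2) ≤ c ^ ((1:ℝ)/2) :=
        Real.rpow_le_rpow (Real.rpow_nonneg hMdetpos.le _) h3 (by norm_num)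
    _ = Real.sqrt c := (Real.sqrt_eq_rpow c).symm

/-- Minkowski-type estimate: if `α₁, …, αₘ` are lattice vectors (integral combinations of
the lattice basis `b`) spanning the `n`-dimensional space over `ℝ`, then for some `k`,
`√(q(αₖ)) ≥ Δ(L, q)^(1/(2n))`. -/
theorem exists_large_lattice_generator
    (n m : ℕ) (hn : 0 < n)
    (q : QuadraticForm ℝ (Fin n → ℝ)) (hq : ∀ x, x ≠ 0 → 0 < q x)
    (b : Module.Basis (Fin n) ℝ (Fin n → ℝ))
    (α : Fin m → Fin n → ℝ)
    (hmem : ∀ i, α i ∈ Submodule.span ℤ (Set.range ⇑b))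
    (hspan : Submodule.span ℝ (Set.range α) = ⊤) :
    ∃ k, Real.sqrt (q (α k)) ≥ (gramDet q ⇑b) ^ ((1 : ℝ) / (2 * (n : ℝ))) :=
  exists_large_lattice_generator' n m hn q hq b α hmem hspan
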